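/- For every y₀ > 0 there exists a map f from the half-plane Ω = {(x,y) ∈ ℝ² : y > y₀} into Euclidean ℝ³ which is differentiable on Ω with locally Lipschitz derivative (i.e. of class C^{1,1}), and whose induced first fundamental form equals the Lobachevsky metric: for every (x,y) ∈ Ω, ⟨∂ₓf(x,y), ∂ₓf(x,y)⟩ = 1/y², ⟨∂ₓf(x,y), ∂_yf(x,y)⟩ = 0, and ⟨∂_yf(x,y), ∂_yf(x,y)⟩ = 1/y². In other words, the standard hyperbolic plane restricted to Ω admits a C^{1,1} isometric immersion into ℝ³. -/

import Mathlib

/-- A map `f : Ω ⊆ ℝ² → ℝ³` is a `C^{1,1}` isometric immersion of the metric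
`E dx² + 2F dxdy + G dy²` on `Ω` if it is differentiable on `Ω`, its derivative is
locally Lipschitz on `Ω`, and the induced first fundamental form equals the metric. -/
def IsC11IsometricImmersion (Ω : Set (ℝ × ℝ)) (E F G : ℝ × ℝ → ℝ)
    (f : ℝ × ℝ → EuclideanSpace ℝ (Fin 3)) : Prop :=
  (∀ p ∈ Ω, DifferentiableAt ℝ f p) ∧
  (∀ p ∈ Ω, ∃ ε > (0 : ℝ), ∃ K : NNReal,
      LipschitzOnWith K (fderiv ℝ f) (Metric.ball p ε ∩ Ω)) ∧
  (∀ p ∈ Ω,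
      (inner ℝ (fderiv ℝ f p (1, 0)) (fderiv ℝ f p (1, 0)) : ℝ) = E p ∧
      (inner ℝ (fderiv ℝ f p (1, 0)) (fderiv ℝ f p (0, 1)) : ℝ) = F p ∧
      (inner ℝ (fderiv ℝ f p (0, 1)) (fderiv ℝ f p (0, 1)) : ℝ) = G p)

noncomputable section LobAux

open Real ContinuousLinearMap

/-- The components of the pseudosphere immersion (rescaled so that it is defined
for `y > c`). -/
private def lobF (c : ℝ) : ℝ × ℝ → Fin 3 → ℝ := fun q =>
  ![c / q.2 * Real.cos (q.1 / c), c / q.2 * Real.sin (q.1 / c),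
    Real.log (q.2 + Real.sqrt (q.2 ^ 2 - c ^ 2)) - Real.sqrt (q.2 ^ 2 - c ^ 2) / q.2]

/-- The pseudosphere immersion, as a map into `EuclideanSpace ℝ (Fin 3)`. -/
private def lobf (c : ℝ) : ℝ × ℝ → EuclideanSpace ℝ (Fin 3) := fun q =>
  (EuclideanSpace.equiv (Fin 3) ℝ).symm (lobF c q)

/-- The explicit total derivative of `lobF` at `p`. -/
private def lobD (c : ℝ) (p : ℝ × ℝ) : Fin 3 → (ℝ × ℝ →L[ℝ] ℝ) :=
  ![(-(Real.sin (p.1 / c) / p.2)) • ContinuousLinearMap.fst ℝ ℝ ℝ +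
      (-(c / p.2 ^ 2 * Real.cos (p.1 / c))) • ContinuousLinearMap.snd ℝ ℝ ℝ,
    (Real.cos (p.1 / c) / p.2) • ContinuousLinearMap.fst ℝ ℝ ℝ +
      (-(c / p.2 ^ 2 * Real.sin (p.1 / c))) • ContinuousLinearMap.snd ℝ ℝ ℝ,
    (Real.sqrt (p.2 ^ 2 - c ^ 2) / p.2 ^ 2) • ContinuousLinearMap.snd ℝ ℝ ℝ]

private lemma lob_deriv3 (c : ℝ) (hc : 0 < c) {y : ℝ} (hy : c < y) :
    HasDerivAt
      (fun t : ℝ => Real.log (t + Real.sqrt (t ^ 2 - c ^ 2)) - Real.sqrt (t ^ 2 - c ^ 2) / t)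
      (Real.sqrt (y ^ 2 - c ^ 2) / y ^ 2) y := by
  have hy0 : 0 < y := hc.trans hy
  have hq : 0 < y ^ 2 - c ^ 2 := by nlinarith
  set s := Real.sqrt (y ^ 2 - c ^ 2) with hs_def
  have hs : 0 < s := Real.sqrt_pos.2 hq
  have hs2 : s ^ 2 = y ^ 2 - c ^ 2 := Real.sq_sqrt hq.le
  have hq' : HasDerivAt (fun t : ℝ => t ^ 2 - c ^ 2) (2 * y) y := by
    simpa using (hasDerivAt_pow 2 y).sub_const (c ^ 2)
  have hsqrt : HasDerivAt (fun t : ℝ => Real.sqrt (t ^ 2 - c ^ 2)) (y / s) y := by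
    have := (Real.hasDerivAt_sqrt (ne_of_gt hq)).comp y hq'
    refine this.congr_deriv ?_
    rw [← hs_def]
    field_simp
  have hys : 0 < y + s := by positivity
  have hlog : HasDerivAt (fun t : ℝ => Real.log (t + Real.sqrt (t ^ 2 - c ^ 2)))
      ((y + s)⁻¹ * (1 + y / s)) y := by
    have hinner : HasDerivAt (fun t : ℝ => t + Real.sqrt (t ^ 2 - c ^ 2)) (1 + y / s) y :=
      (hasDerivAt_id y).add hsqrt
    have := (Real.hasDerivAt_log (ne_of_gt hys)).comp y hinner
    exact this
  have hdiv : HasDerivAt (fun t : ℝ => Real.sqrt (t ^ 2 - c ^ 2) / t)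
      ((y / s * y - s * 1) / y ^ 2) y := hsqrt.div (hasDerivAt_id y) (ne_of_gt hy0)
  have := hlog.sub hdiv
  refine this.congr_deriv ?_
  field_simp
  nlinarith [hs2, sq_nonneg s, sq_nonneg y]

private lemma lob_hasA (c : ℝ) (hc : 0 < c) (p : ℝ × ℝ) (hy : 0 < p.2) :
    HasFDerivAt (fun q : ℝ × ℝ => c / q.2 * Real.cos (q.1 / c))
      ((-(Real.sin (p.1 / c) / p.2)) • ContinuousLinearMap.fst ℝ ℝ ℝ +
        (-(c / p.2 ^ 2 * Real.cos (p.1 / c))) • ContinuousLinearMap.snd ℝ ℝ ℝ) p := by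
  have hsnd : HasFDerivAt Prod.snd (ContinuousLinearMap.snd ℝ ℝ ℝ) p := hasFDerivAt_snd
  have hfst : HasFDerivAt Prod.fst (ContinuousLinearMap.fst ℝ ℝ ℝ) p := hasFDerivAt_fst
  have h1 : HasFDerivAt (fun q : ℝ × ℝ => c / q.2)
      (-((c * (p.2 ^ 2)⁻¹) • ContinuousLinearMap.snd ℝ ℝ ℝ)) p := by
    have := ((hasDerivAt_inv (ne_of_gt hy)).const_mul c).comp_hasFDerivAt p hsnd
    simpa [div_eq_mul_inv, Function.comp_def] using this
  have hin : HasFDerivAt (fun q : ℝ × ℝ => q.1 / c)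
      (c⁻¹ • ContinuousLinearMap.fst ℝ ℝ ℝ) p := by
    simpa [div_eq_mul_inv] using hfst.mul_const c⁻¹
  have h2 : HasFDerivAt (fun q : ℝ × ℝ => Real.cos (q.1 / c))
      ((-Real.sin (p.1 / c)) • (c⁻¹ • ContinuousLinearMap.fst ℝ ℝ ℝ)) p :=
    by have := (Real.hasDerivAt_cos (p.1 / c)).comp_hasFDerivAt p hin; exact this
  have := h1.mul h2
  refine this.congr_fderiv ?_
  ext
  all_goals simp
  all_goals field_simp
  all_goals ring

private lemma lob_hasB (c : ℝ) (hc : 0 < c) (p : ℝ × ℝ) (hy : 0 < p.2) :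
    HasFDerivAt (fun q : ℝ × ℝ => c / q.2 * Real.sin (q.1 / c))
      ((Real.cos (p.1 / c) / p.2) • ContinuousLinearMap.fst ℝ ℝ ℝ +
        (-(c / p.2 ^ 2 * Real.sin (p.1 / c))) • ContinuousLinearMap.snd ℝ ℝ ℝ) p := by
  have hsnd : HasFDerivAt Prod.snd (ContinuousLinearMap.snd ℝ ℝ ℝ) p := hasFDerivAt_snd
  have hfst : HasFDerivAt Prod.fst (ContinuousLinearMap.fst ℝ ℝ ℝ) p := hasFDerivAt_fst
  have h1 : HasFDerivAt (fun q : ℝ × ℝ => c / q.2)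
      (-((c * (p.2 ^ 2)⁻¹) • ContinuousLinearMap.snd ℝ ℝ ℝ)) p := by
    have := ((hasDerivAt_inv (ne_of_gt hy)).const_mul c).comp_hasFDerivAt p hsnd
    simpa [div_eq_mul_inv, Function.comp_def] using this
  have hin : HasFDerivAt (fun q : ℝ × ℝ => q.1 / c)
      (c⁻¹ • ContinuousLinearMap.fst ℝ ℝ ℝ) p := by
    simpa [div_eq_mul_inv] using hfst.mul_const c⁻¹
  have h2 : HasFDerivAt (fun q : ℝ × ℝ => Real.sin (q.1 / c))
      ((Real.cos (p.1 / c)) • (c⁻¹ • ContinuousLinearMap.fst ℝ ℝ ℝ)) p :=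
    by have := (Real.hasDerivAt_sin (p.1 / c)).comp_hasFDerivAt p hin; exact this
  have := h1.mul h2
  refine this.congr_fderiv ?_
  ext
  all_goals simp
  all_goals field_simp
  all_goals ring

private lemma lob_hasC (c : ℝ) (hc : 0 < c) (p : ℝ × ℝ) (hy : c < p.2) :
    HasFDerivAt (fun q : ℝ × ℝ =>
        Real.log (q.2 + Real.sqrt (q.2 ^ 2 - c ^ 2)) - Real.sqrt (q.2 ^ 2 - c ^ 2) / q.2)
      ((Real.sqrt (p.2 ^ 2 - c ^ 2) / p.2 ^ 2) • ContinuousLinearMap.snd ℝ ℝ ℝ) p := by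
  have hsnd : HasFDerivAt Prod.snd (ContinuousLinearMap.snd ℝ ℝ ℝ) p := hasFDerivAt_snd
  have := (lob_deriv3 c hc (y := p.2) hy).comp_hasFDerivAt p hsnd
  simpa [Function.comp_def] using this

private lemma lob_hasF (c : ℝ) (hc : 0 < c) (p : ℝ × ℝ) (hp : c < p.2) :
    HasFDerivAt (lobf c)
      (((EuclideanSpace.equiv (Fin 3) ℝ).symm :
          (Fin 3 → ℝ) →L[ℝ] EuclideanSpace ℝ (Fin 3)).comp
        (ContinuousLinearMap.pi (lobD c p))) p := by
  have hy0 : 0 < p.2 := hc.trans hp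
  have hF : HasFDerivAt (lobF c) (ContinuousLinearMap.pi (lobD c p)) p := by
    apply hasFDerivAt_pi''
    intro i
    rw [ContinuousLinearMap.proj_pi]
    fin_cases i
    · simpa [lobF, lobD] using lob_hasA c hc p hy0
    · simpa [lobF, lobD] using lob_hasB c hc p hy0
    · simpa [lobF, lobD] using lob_hasC c hc p hp
  exact ((EuclideanSpace.equiv (Fin 3) ℝ).symm.hasFDerivAt).comp p hF

private lemma lob_contDiffAt (c : ℝ) (hc : 0 < c) (p : ℝ × ℝ) (hp : c < p.2) :
    ContDiffAt ℝ 2 (lobf c) p := by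
  have hy0 : 0 < p.2 := hc.trans hp
  have hq : 0 < p.2 ^ 2 - c ^ 2 := by nlinarith
  have hsq : ContDiffAt ℝ 2 (fun q : ℝ × ℝ => Real.sqrt (q.2 ^ 2 - c ^ 2)) p :=
    (Real.contDiffAt_sqrt hq.ne').comp p ((contDiffAt_snd.pow 2).sub contDiffAt_const)
  have hys : 0 < p.2 + Real.sqrt (p.2 ^ 2 - c ^ 2) := by positivity
  have hF : ContDiffAt ℝ 2 (lobF c) p := by
    apply contDiffAt_pi.2
    intro i
    fin_cases i
    · exact (contDiffAt_const.div contDiffAt_snd hy0.ne').mul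
        ((Real.contDiff_cos.contDiffAt).comp p (contDiffAt_fst.div_const _))
    · exact (contDiffAt_const.div contDiffAt_snd hy0.ne').mul
        ((Real.contDiff_sin.contDiffAt).comp p (contDiffAt_fst.div_const _))
    · exact ((Real.contDiffAt_log.2 hys.ne').comp p (contDiffAt_snd.add hsq)).sub
        (hsq.div contDiffAt_snd hy0.ne')
  exact ((EuclideanSpace.equiv (Fin 3) ℝ).symm.contDiff.contDiffAt).comp p hF

end LobAux

/-- The standard hyperbolic (Lobachevsky) plane, restricted to any half-plane
`{y > y₀}` with `y₀ > 0`, admits a `C^{1,1}` isometric immersion into `ℝ³`. -/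
theorem lobachevsky_C11_isometric_immersion (y₀ : ℝ) (hy₀ : 0 < y₀) :
    ∃ f : ℝ × ℝ → EuclideanSpace ℝ (Fin 3),
      IsC11IsometricImmersion {p : ℝ × ℝ | y₀ < p.2}
        (fun p => 1 / p.2 ^ 2) (fun _ => 0) (fun p => 1 / p.2 ^ 2) f := by
  refine ⟨lobf y₀, ?_⟩
  unfold IsC11IsometricImmersion
  refine ⟨?_, ?_, ?_⟩
  · -- differentiability
    intro p hp
    exact (lob_hasF y₀ hy₀ p hp).differentiableAt
  · -- local Lipschitz property of the derivative
    intro p hp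
    have hcd : ContDiffAt ℝ 2 (lobf y₀) p := lob_contDiffAt y₀ hy₀ p hp
    have h1 : ContDiffAt ℝ 1 (fderiv ℝ (lobf y₀)) p := hcd.fderiv_right (by norm_num)
    obtain ⟨K, t, ht, hK⟩ := h1.exists_lipschitzOnWith
    obtain ⟨ε, hε, hball⟩ := Metric.mem_nhds_iff.1 ht
    exact ⟨ε, hε, K, hK.mono (Set.inter_subset_left.trans hball)⟩
  · -- the first fundamental form
    intro p hp
    have hp' : y₀ < p.2 := hp
    have hy0 : 0 < p.2 := hy₀.trans hp'
    have hq : 0 < p.2 ^ 2 - y₀ ^ 2 := by nlinarith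
    have hs2 : Real.sqrt (p.2 ^ 2 - y₀ ^ 2) ^ 2 = p.2 ^ 2 - y₀ ^ 2 := Real.sq_sqrt hq.le
    have pyth := Real.sin_sq_add_cos_sq (p.1 / y₀)
    rw [(lob_hasF y₀ hy₀ p hp').fderiv]
    refine ⟨?_, ?_, ?_⟩
    · simp [PiLp.inner_apply, RCLike.inner_apply, Fin.sum_univ_three, lobD, -inner_self_eq_norm_sq_to_K]
      field_simp
      linear_combination pyth
    · simp [PiLp.inner_apply, RCLike.inner_apply, Fin.sum_univ_three, lobD]
      ring
    · simp [PiLp.inner_apply, RCLike.inner_apply, Fin.sum_univ_three, lobD, -inner_self_eq_norm_sq_to_K]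
      field_simp
      nlinarith [pyth, hs2]
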